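/- Let 0 < s < n, m ≥ 1, 1 ≤ q < s, and let M be a real n×s matrix with rank(MᵀM) = s, N a real n×m matrix, σ > 0, and constants C₁, C₂, C₃ > 0. Assume: (i) every column x of the matrix [M N] satisfies ‖x‖₂² ≤ C₁·n; (ii) every entry of (MᵀM)⁻¹ has absolute value at most C₂/n; (iii) A is a q×s matrix with A_{jj} ∈ {0,1} for all j and A_{jk} = 0 for j ≠ k, W := A(MᵀM)⁻¹Aᵀ is positive definite, and every entry of W^{−1/2} has absolute value at most C₃·√n. Let η ∈ ℝᵐ satisfy ‖η‖_∞ ≤ u and have at most s_small nonzero entries. Then the noncentrality parameter λ := ‖BIAS‖₂², with BIAS := σ⁻¹·W^{−1/2}·A(MᵀM)⁻¹MᵀNη, satisfies λ ≤ ((C₁·C₂·C₃/σ)·s^{5/2}·n^{1/2}·s_small·u)². -/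

import Mathlib

open Matrix

open scoped ComplexOrder in
/-- The square root of a positive semidefinite matrix, as defined in the older Mathlib
(`Matrix.PosSemidef.sqrt`, removed since). -/
noncomputable def Matrix.PosSemidef.sqrt {n 𝕜 : Type*} [Fintype n] [DecidableEq n] [RCLike 𝕜]
    {A : Matrix n n 𝕜} (hA : A.PosSemidef) : Matrix n n 𝕜 :=
  hA.1.eigenvectorUnitary.1 * diagonal ((↑) ∘ (√·) ∘ hA.1.eigenvalues) *
  (star hA.1.eigenvectorUnitary : Matrix n n 𝕜)

/-- Generic entrywise bound for a matrix-vector product. -/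
lemma abs_mulVec_le_aux {p r : ℕ} (B : Matrix (Fin p) (Fin r) ℝ) (v : Fin r → ℝ)
    {c d : ℝ} (hc : 0 ≤ c) (hB : ∀ j k, |B j k| ≤ c) (hv : ∀ k, |v k| ≤ d)
    (j : Fin p) : |B.mulVec v j| ≤ r * (c * d) := by
  calc |B.mulVec v j| = |∑ k, B j k * v k| := by simp [Matrix.mulVec, dotProduct]
    _ ≤ ∑ k, |B j k * v k| := Finset.abs_sum_le_sum_abs _ _
    _ ≤ ∑ _k : Fin r, c * d := Finset.sum_le_sum fun k _ => by
        rw [abs_mul]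
        exact mul_le_mul (hB j k) (hv k) (abs_nonneg _) hc
    _ = r * (c * d) := by simp [Finset.sum_const, Finset.card_univ, nsmul_eq_mul]

/-- **Bound on the noncentrality parameter** (Mandozzi–Bühlmann, Section 5.3):
under the column-norm, Gram-inverse and `W^{-1/2}` entry bounds, and with `η` having
`‖η‖_∞ ≤ u` and at most `s_small` nonzero entries, the noncentrality parameter
`λ = ‖BIAS‖²`, `BIAS = σ⁻¹ W^{-1/2} A (MᵀM)⁻¹ Mᵀ N η`, satisfies
`λ ≤ ((C₁C₂C₃/σ) s^{5/2} n^{1/2} s_small u)²`. -/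
theorem noncentrality_bound
    (n s m q : ℕ) (hs : 0 < s) (hsn : s < n) (hm : 1 ≤ m) (hq : 1 ≤ q) (hqs : q < s)
    (M : Matrix (Fin n) (Fin s) ℝ) (hM : (Mᵀ * M).rank = s)
    (N : Matrix (Fin n) (Fin m) ℝ)
    {σ : ℝ} (hσ : 0 < σ)
    {C₁ C₂ C₃ : ℝ} (hC₁ : 0 < C₁) (hC₂ : 0 < C₂) (hC₃ : 0 < C₃)
    (hMcol : ∀ j : Fin s, ∑ i, (M i j) ^ 2 ≤ C₁ * n)
    (hNcol : ∀ j : Fin m, ∑ i, (N i j) ^ 2 ≤ C₁ * n)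
    (hGram : ∀ j k : Fin s, |((Mᵀ * M)⁻¹) j k| ≤ C₂ / n)
    (A : Matrix (Fin q) (Fin s) ℝ)
    (hAdiag : ∀ j : Fin q,
      A j (Fin.castLE hqs.le j) = 0 ∨ A j (Fin.castLE hqs.le j) = 1)
    (hAoff : ∀ (j : Fin q) (k : Fin s), (j : ℕ) ≠ (k : ℕ) → A j k = 0)
    (hW : (A * (Mᵀ * M)⁻¹ * Aᵀ).PosDef)
    (hWhalf : ∀ j k : Fin q, |((Matrix.PosSemidef.sqrt hW.posSemidef)⁻¹) j k| ≤ C₃ * Real.sqrt n)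
    {u : ℝ} (η : Fin m → ℝ) (hη : ∀ i, |η i| ≤ u)
    (sSmall : ℕ) (hsmall : (Finset.univ.filter (fun i => η i ≠ 0)).card ≤ sSmall) :
    ∑ i, ((σ⁻¹ • (((Matrix.PosSemidef.sqrt hW.posSemidef)⁻¹ * A * (Mᵀ * M)⁻¹ * Mᵀ * N).mulVec η)) i) ^ 2
      ≤ ((C₁ * C₂ * C₃ / σ) * (s : ℝ) ^ ((5 : ℝ) / 2) * (n : ℝ) ^ ((1 : ℝ) / 2)
          * (sSmall : ℝ) * u) ^ 2 := by
  have hn0 : 0 < n := hs.trans hsn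
  have hnR : (0:ℝ) < (n:ℝ) := by exact_mod_cast hn0
  have hu : 0 ≤ u := le_trans (abs_nonneg _) (hη ⟨0, hm⟩)
  set P := (Matrix.PosSemidef.sqrt hW.posSemidef)⁻¹ with hPdef
  set G := (Mᵀ * M)⁻¹ with hGdef
  -- entrywise bound on MᵀN via Cauchy–Schwarz
  have hMN : ∀ (a : Fin s) (b : Fin m), |(Mᵀ * N) a b| ≤ C₁ * n := by
    intro a b
    have h1 : (Mᵀ * N) a b = ∑ i, M i a * N i b := by
      simp [Matrix.mul_apply, Matrix.transpose_apply]
    rw [h1]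
    have hcs := Finset.sum_mul_sq_le_sq_mul_sq Finset.univ (fun i => M i a) (fun i => N i b)
    have hb2 : (∑ i, M i a * N i b) ^ 2 ≤ (C₁ * n) ^ 2 := by
      calc (∑ i, M i a * N i b) ^ 2 ≤ (∑ i, (M i a) ^ 2) * ∑ i, (N i b) ^ 2 := hcs
        _ ≤ (C₁ * n) * (C₁ * n) := by
            apply mul_le_mul (hMcol a) (hNcol b)
              (Finset.sum_nonneg fun i _ => sq_nonneg _) (by positivity)
        _ = (C₁ * n) ^ 2 := by ring
    exact abs_le_of_sq_le_sq hb2 (by positivity)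
  -- step 0 : w₀ = (MᵀN) η
  set w₀ := (Mᵀ * N).mulVec η with hw₀
  have hB0 : 0 ≤ C₁ * n * ((sSmall : ℝ) * u) := by positivity
  have h0 : ∀ a, |w₀ a| ≤ C₁ * n * ((sSmall : ℝ) * u) := by
    intro a
    have hsum : w₀ a = ∑ b ∈ Finset.univ.filter (fun b => η b ≠ 0), (Mᵀ * N) a b * η b := by
      rw [hw₀]
      simp only [Matrix.mulVec, dotProduct]
      exact (Finset.sum_filter_of_ne (fun b _ hb => by
        intro h; apply hb; rw [h, mul_zero])).symm
    rw [hsum]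
    calc |∑ b ∈ Finset.univ.filter (fun b => η b ≠ 0), (Mᵀ * N) a b * η b|
        ≤ ∑ b ∈ Finset.univ.filter (fun b => η b ≠ 0), |(Mᵀ * N) a b * η b| :=
          Finset.abs_sum_le_sum_abs _ _
      _ ≤ ∑ _b ∈ Finset.univ.filter (fun b => η b ≠ 0), (C₁ * n) * u :=
          Finset.sum_le_sum fun b _ => by
            rw [abs_mul]
            exact mul_le_mul (hMN a b) (hη b) (abs_nonneg _) (by positivity)
      _ = ((Finset.univ.filter (fun b => η b ≠ 0)).card : ℝ) * ((C₁ * n) * u) := by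
          rw [Finset.sum_const, nsmul_eq_mul]
      _ ≤ (sSmall : ℝ) * ((C₁ * n) * u) := by
          apply mul_le_mul_of_nonneg_right _ (by positivity)
          exact_mod_cast hsmall
      _ = C₁ * n * ((sSmall : ℝ) * u) := by ring
  -- step 1 : w₁ = G w₀
  set w₁ := G.mulVec w₀ with hw₁
  have hB1 : 0 ≤ (s : ℝ) * ((C₂ / n) * (C₁ * n * ((sSmall : ℝ) * u))) := by positivity
  have h1 : ∀ a, |w₁ a| ≤ (s : ℝ) * ((C₂ / n) * (C₁ * n * ((sSmall : ℝ) * u))) :=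
    fun a => abs_mulVec_le_aux G w₀ (by positivity) hGram h0 a
  -- step 2 : w₂ = A w₁ ; each row of A has at most one entry, of absolute value ≤ 1
  set w₂ := A.mulVec w₁ with hw₂
  have h2 : ∀ j, |w₂ j| ≤ (s : ℝ) * ((C₂ / n) * (C₁ * n * ((sSmall : ℝ) * u))) := by
    intro j
    have hsingle : w₂ j = A j (Fin.castLE hqs.le j) * w₁ (Fin.castLE hqs.le j) := by
      rw [hw₂]
      simp only [Matrix.mulVec, dotProduct]
      refine Finset.sum_eq_single _ (fun b _ hb => ?_) (fun h => absurd (Finset.mem_univ _) h)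
      rw [hAoff j b, zero_mul]
      intro hcontra
      exact hb (Fin.ext (by simp [← hcontra]))
    rw [hsingle, abs_mul]
    rcases hAdiag j with h | h <;> rw [h]
    · simpa using hB1
    · simpa using h1 (Fin.castLE hqs.le j)
  -- step 3 : w₃ = P w₂
  set w₃ := P.mulVec w₂ with hw₃
  have h3 : ∀ i, |w₃ i| ≤ (q : ℝ) * ((C₃ * Real.sqrt n) *
      ((s : ℝ) * ((C₂ / n) * (C₁ * n * ((sSmall : ℝ) * u))))) :=
    fun i => abs_mulVec_le_aux P w₂ (by positivity) hWhalf h2 i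
  -- identify the vector in the statement with w₃
  have hvec : (P * A * G * Mᵀ * N).mulVec η = w₃ := by
    rw [hw₃, hw₂, hw₁, hw₀]
    simp only [Matrix.mulVec_mulVec, Matrix.mul_assoc]
  -- put everything together
  set B : ℝ := (q : ℝ) * ((C₃ * Real.sqrt n) *
      ((s : ℝ) * ((C₂ / n) * (C₁ * n * ((sSmall : ℝ) * u))))) with hBdef
  have hBnn : 0 ≤ B := by rw [hBdef]; positivity
  have hsum : ∑ i, ((σ⁻¹ • ((P * A * G * Mᵀ * N).mulVec η)) i) ^ 2
      ≤ (q : ℝ) * (σ⁻¹ * B) ^ 2 := by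
    rw [hvec]
    calc ∑ i, ((σ⁻¹ • w₃) i) ^ 2 ≤ ∑ _i : Fin q, (σ⁻¹ * B) ^ 2 := by
          refine Finset.sum_le_sum fun i _ => ?_
          simp only [Pi.smul_apply, smul_eq_mul, mul_pow]
          apply mul_le_mul_of_nonneg_left _ (by positivity)
          calc (w₃ i) ^ 2 = |w₃ i| ^ 2 := (sq_abs _).symm
            _ ≤ B ^ 2 := pow_le_pow_left₀ (abs_nonneg _) (h3 i) 2
      _ = (q : ℝ) * (σ⁻¹ * B) ^ 2 := by
          rw [Finset.sum_const, nsmul_eq_mul]; simp [Finset.card_univ]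
  refine le_trans hsum ?_
  -- now pure algebra: q ≤ s, √n² = n, rpow arithmetic
  have hqsR : (q : ℝ) ≤ (s : ℝ) := by exact_mod_cast hqs.le
  have hstep : (q : ℝ) * (σ⁻¹ * B) ^ 2 ≤
      (s : ℝ) * (σ⁻¹ * ((s : ℝ) * ((C₃ * Real.sqrt n) *
        ((s : ℝ) * ((C₂ / n) * (C₁ * n * ((sSmall : ℝ) * u))))))) ^ 2 := by
    rw [hBdef]
    gcongr
  refine le_trans hstep (le_of_eq ?_)
  set t := Real.sqrt (n : ℝ) with htdef
  have ht : t ^ 2 = (n : ℝ) := Real.sq_sqrt (by positivity)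
  have ht0 : 0 < t := Real.sqrt_pos.mpr hnR
  have e1 : ((s : ℝ) ^ ((5 : ℝ) / 2)) ^ 2 = (s : ℝ) ^ (5 : ℕ) := by
    rw [← Real.rpow_natCast ((s : ℝ) ^ ((5 : ℝ) / 2)) 2,
      ← Real.rpow_mul (Nat.cast_nonneg s), ← Real.rpow_natCast (s : ℝ) 5]
    norm_num
  have e2 : ((n : ℝ) ^ ((1 : ℝ) / 2)) ^ 2 = (n : ℝ) := by
    rw [← Real.rpow_natCast ((n : ℝ) ^ ((1 : ℝ) / 2)) 2,
      ← Real.rpow_mul (Nat.cast_nonneg n),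
      show (1 : ℝ) / 2 * ((2 : ℕ) : ℝ) = 1 by norm_num, Real.rpow_one]
  have expand : ((C₁ * C₂ * C₃ / σ) * (s : ℝ) ^ ((5 : ℝ) / 2) * (n : ℝ) ^ ((1 : ℝ) / 2)
      * (sSmall : ℝ) * u) ^ 2
      = (C₁ * C₂ * C₃ / σ) ^ 2 * ((s : ℝ) ^ ((5 : ℝ) / 2)) ^ 2
        * ((n : ℝ) ^ ((1 : ℝ) / 2)) ^ 2 * (sSmall : ℝ) ^ 2 * u ^ 2 := by ring
  rw [expand, e1, e2, ← ht]
  field_simp
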